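/- Let a₂, a₀ ∈ ℚ with a₀·(a₂² − 4a₀) ≠ 0. If the set of rational points (X, Y) ∈ ℚ² on the curve C : Y² = X⁴ + a₂X² + a₀ is infinite, then the set of rational points (X, Y) on C for which there exist p, q ∈ ℚ with Y = p² − (a₂² − 4a₀)·q² is infinite. -/

import Mathlib

open Polynomial in
lemma stmt3_root_finite (p : ℚ[X]) (hp : p ≠ 0) : {x : ℚ | p.eval x = 0}.Finite :=
  Polynomial.finite_setOf_isRoot hp

lemma stmt3_sq_finite (k : ℚ) : {y : ℚ | y ^ 2 = k}.Finite := by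
  rcases Set.eq_empty_or_nonempty {y : ℚ | y ^ 2 = k} with he | ⟨y₀, hy₀⟩
  · simp [he]
  · apply Set.Finite.subset (((Set.finite_singleton (-y₀)).insert y₀))
    intro y hy
    simp only [Set.mem_setOf_eq] at hy hy₀
    have : (y - y₀) * (y + y₀) = 0 := by linear_combination hy - hy₀
    rcases mul_eq_zero.1 this with h1 | h1
    · exact Or.inl (by linarith)
    · exact Or.inr (by simp only [Set.mem_singleton_iff]; linarith)

lemma stmt3_pair_finite {r : ℚ → Prop} {s : ℚ → ℚ → Prop}
    (hr : {x | r x}.Finite) (hs : ∀ x, {y | s x y}.Finite) :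
    {P : ℚ × ℚ | r P.1 ∧ s P.1 P.2}.Finite := by
  apply Set.Finite.subset (Set.Finite.biUnion hr
    (fun x _ => ((Set.finite_singleton x).prod (hs x))))
  rintro ⟨x, y⟩ ⟨h1, h2⟩
  exact Set.mem_biUnion h1 ⟨rfl, h2⟩

lemma stmt3_image_infinite {α β : Type*} (f : α → β) (s : Set α) (hs : s.Infinite)
    (hf : ∀ b, {a ∈ s | f a = b}.Finite) : (f '' s).Infinite := by
  intro hfin
  apply hs
  have hsub : s ⊆ ⋃ b ∈ f '' s, {a ∈ s | f a = b} :=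
    fun a ha => Set.mem_biUnion (Set.mem_image_of_mem f ha) ⟨ha, rfl⟩
  exact Set.Finite.subset (Set.Finite.biUnion hfin (fun b _ => hf b)) hsub

theorem stmt_3 (a₂ a₀ : ℚ) (h : a₀ * (a₂ ^ 2 - 4 * a₀) ≠ 0)
    (hinf : {P : ℚ × ℚ | P.2 ^ 2 = P.1 ^ 4 + a₂ * P.1 ^ 2 + a₀}.Infinite) :
    {P : ℚ × ℚ | P.2 ^ 2 = P.1 ^ 4 + a₂ * P.1 ^ 2 + a₀ ∧
      ∃ p q : ℚ, P.2 = p ^ 2 - (a₂ ^ 2 - 4 * a₀) * q ^ 2}.Infinite := by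
  have ha₀ : a₀ ≠ 0 := fun hh => h (by simp [hh])
  set D : ℚ := a₂ ^ 2 - 4 * a₀ with hD
  set S : Set (ℚ × ℚ) := {P : ℚ × ℚ | P.2 ^ 2 = P.1 ^ 4 + a₂ * P.1 ^ 2 + a₀} with hS
  set F : ℚ × ℚ → ℚ × ℚ := fun P =>
    ((P.1 ^ 4 - a₀) / (2 * P.1 * P.2),
      P.2 ^ 2 / (4 * P.1 ^ 2) - D * P.1 ^ 2 / (4 * P.2 ^ 2)) with hF
  set S' : Set (ℚ × ℚ) := {P ∈ S | P.1 ≠ 0 ∧ P.2 ≠ 0} with hS'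
  -- S' is infinite
  have hbad : {P ∈ S | P.1 = 0 ∨ P.2 = 0}.Finite := by
    apply Set.Finite.subset (Set.Finite.union
      ((Set.finite_singleton (0:ℚ)).prod (stmt3_sq_finite a₀))
      ((stmt3_root_finite (Polynomial.X ^ 4 + Polynomial.C a₂ * Polynomial.X ^ 2
          + Polynomial.C a₀) (by
        intro hp
        have := congrArg (fun q => Polynomial.coeff q 0) hp
        simp [Polynomial.coeff_X_pow] at this
        exact ha₀ this)).prod (Set.finite_singleton (0:ℚ))))
    rintro ⟨x, y⟩ ⟨hP, hxy⟩
    simp only [hS, Set.mem_setOf_eq] at hP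
    rcases hxy with hx | hy
    · left
      simp only [Set.mem_setOf_eq] at hx ⊢
      refine ⟨hx, ?_⟩
      rw [hx] at hP; simpa using hP
    · right
      simp only [Set.mem_setOf_eq] at hy ⊢
      refine ⟨?_, hy⟩
      rw [hy] at hP
      simp only [Set.mem_setOf_eq, Polynomial.eval_add, Polynomial.eval_pow, Polynomial.eval_mul,
        Polynomial.eval_C, Polynomial.eval_X]
      linear_combination -hP
  have hS'inf : S'.Infinite := by
    have : S' = S \ {P ∈ S | P.1 = 0 ∨ P.2 = 0} := by
      ext P
      simp only [hS', Set.mem_setOf_eq, Set.mem_diff, not_and, not_or]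
      tauto
    rw [this]
    exact Set.Infinite.diff hinf hbad
  -- image of S' under F lies in the target set
  have himg : F '' S' ⊆ {P : ℚ × ℚ | P.2 ^ 2 = P.1 ^ 4 + a₂ * P.1 ^ 2 + a₀ ∧
      ∃ p q : ℚ, P.2 = p ^ 2 - (a₂ ^ 2 - 4 * a₀) * q ^ 2} := by
    rintro _ ⟨⟨x, y⟩, ⟨hP, hx, hy⟩, rfl⟩
    simp only [hS, Set.mem_setOf_eq] at hP
    constructor
    · show (y ^ 2 / (4 * x ^ 2) - D * x ^ 2 / (4 * y ^ 2)) ^ 2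
        = ((x ^ 4 - a₀) / (2 * x * y)) ^ 4 + a₂ * ((x ^ 4 - a₀) / (2 * x * y)) ^ 2 + a₀
      field_simp
      ring_nf
      linear_combination ((1024*y^6*x^6*a₀^3 - 1024*y^6*x^8*a₂*a₀^2 - 5120*y^6*x^10*a₀^2 + 1024*y^6*x^10*a₂^2*a₀ + 6144*y^6*x^12*a₂*a₀ - 1024*y^6*x^12*a₂^3 - 5120*y^6*x^14*a₀ + 1024*y^6*x^14*a₂^2 - 1024*y^6*x^16*a₂ + 1024*y^6*x^18 + 1024*y^8*x^6*a₀^2 + 2048*y^8*x^8*a₂*a₀ - 6144*y^8*x^10*a₀ - 1024*y^8*x^10*a₂^2 + 2048*y^8*x^12*a₂ + 1024*y^8*x^14 + 1024*y^10*x^6*a₀ + 1024*y^10*x^8*a₂ + 1024*y^10*x^10 + 1024*y^12*x^6) + (-1024*y^12*x^6*a₂^0*a₀^0 - 1024*y^10*x^10*a₂^0*a₀^0 - 1024*y^10*x^8*a₂^1*a₀^0 - 1024*y^10*x^6*a₂^0*a₀^1 + 1024*y^8*x^10*a₂^2*a₀^0 + 6144*y^8*x^10*a₂^0*a₀^1 -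 1024*y^8*x^14*a₂^0*a₀^0 - 2048*y^8*x^12*a₂^1*a₀^0 - 2048*y^8*x^8*a₂^1*a₀^1 - 1024*y^8*x^6*a₂^0*a₀^2 + 16*y^6*x^0*a₂^0*a₀^0 + 1024*y^6*x^8*a₂^1*a₀^2 - 6144*y^6*x^12*a₂^1*a₀^1 + 1024*y^6*x^16*a₂^1*a₀^0 - 1024*y^6*x^14*a₂^2*a₀^0 + 1024*y^6*x^12*a₂^3*a₀^0 - 1024*y^6*x^10*a₂^2*a₀^1 + 5120*y^6*x^14*a₂^0*a₀^1 + 5120*y^6*x^10*a₂^0*a₀^2 - 1024*y^6*x^18*a₂^0*a₀^0 - 1024*y^6*x^6*a₂^0*a₀^3 + 16*y^4*x^4*a₂^0*a₀^0 + 16*y^4*x^2*a₂^1*a₀^0 + 16*y^4*x^0*a₂^0*a₀^1 - 16*y^2*x^4*a₂^2*a₀^0 - 96*y^2*x^4*a₂^0*a₀^1 + 16*y^2*x^8*a₂^0*a₀^0 + 32*y^2*x^6*a₂^1*a₀^0 + 32*y^2*x^2*a₂^1*a₀^1 + 16*y^2*x^0*a₂^0*a₀^2 - 16*y^0*x^2*a₂^1*a₀^2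 + 96*y^0*x^6*a₂^1*a₀^1 - 16*y^0*x^10*a₂^1*a₀^0 + 16*y^0*x^8*a₂^2*a₀^0 - 16*y^0*x^6*a₂^3*a₀^0 + 16*y^0*x^4*a₂^2*a₀^1 - 80*y^0*x^8*a₂^0*a₀^1 - 80*y^0*x^4*a₂^0*a₀^2 + 16*y^0*x^12*a₂^0*a₀^0 + 16*y^0*x^0*a₂^0*a₀^3)) * hP
    · refine ⟨y / (2 * x), x / (2 * y), ?_⟩
      show y ^ 2 / (4 * x ^ 2) - D * x ^ 2 / (4 * y ^ 2)
        = (y / (2 * x)) ^ 2 - (a₂ ^ 2 - 4 * a₀) * (x / (2 * y)) ^ 2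
      rw [hD]
      field_simp
      ring
  -- fibers of F on S' are finite
  have hfib : ∀ c : ℚ × ℚ, {P ∈ S' | F P = c}.Finite := by
    intro c
    apply Set.Finite.subset (stmt3_pair_finite
      (r := fun x => Polynomial.eval x
        ((Polynomial.X ^ 4 - Polynomial.C a₀) ^ 2
          - Polynomial.C (4 * c.1 ^ 2) * Polynomial.X ^ 2
            * (Polynomial.X ^ 4 + Polynomial.C a₂ * Polynomial.X ^ 2 + Polynomial.C a₀)) = 0)
      (s := fun x y => y ^ 2 = x ^ 4 + a₂ * x ^ 2 + a₀)
      (stmt3_root_finite _ (by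
        intro hp
        have hp' : (Polynomial.X ^ 4 - Polynomial.C a₀) ^ 2
            - Polynomial.C (4 * c.1 ^ 2) * Polynomial.X ^ 2
              * (Polynomial.X ^ 4 + Polynomial.C a₂ * Polynomial.X ^ 2 + Polynomial.C a₀)
            = Polynomial.X ^ 8 - Polynomial.C (4 * c.1 ^ 2) * Polynomial.X ^ 6
              - Polynomial.C (4 * c.1 ^ 2) * Polynomial.C a₂ * Polynomial.X ^ 4
              - Polynomial.C a₀ * Polynomial.X ^ 4 - Polynomial.C a₀ * Polynomial.X ^ 4
              - Polynomial.C (4 * c.1 ^ 2) * Polynomial.C a₀ * Polynomial.X ^ 2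
              + Polynomial.C a₀ * Polynomial.C a₀ := by ring
        have h8 := congrArg (fun q => Polynomial.coeff q 8) (hp'.symm.trans hp)
        simp only [mul_assoc, Polynomial.coeff_add, Polynomial.coeff_sub, Polynomial.coeff_C_mul,
          Polynomial.coeff_X_pow, Polynomial.coeff_C, Polynomial.coeff_zero] at h8
        norm_num at h8))
      (fun x => stmt3_sq_finite _))
    rintro ⟨x, y⟩ ⟨⟨hP, hx, hy⟩, hc⟩
    simp only [hS, Set.mem_setOf_eq] at hP
    have hc1 : (x ^ 4 - a₀) / (2 * x * y) = c.1 := congrArg Prod.fst hc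
    have heq : x ^ 4 - a₀ = c.1 * (2 * x * y) := by
      field_simp at hc1; linarith [hc1]
    refine ⟨?_, hP⟩
    simp only [Set.mem_setOf_eq, Polynomial.eval_sub, Polynomial.eval_add,
      Polynomial.eval_mul, Polynomial.eval_pow, Polynomial.eval_C, Polynomial.eval_X]
    linear_combination (x ^ 4 - a₀ + 2 * c.1 * x * y) * heq + (4 * c.1 ^ 2 * x ^ 2) * hP
  exact Set.Infinite.mono himg (stmt3_image_infinite F S' hS'inf hfib)
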